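/- Let r > 0 and let γ : [0, πr] → ℝⁿ be a C² unit-speed curve (‖γ'(t)‖ = 1 for all t) whose curvature satisfies ‖γ''(t)‖ ≤ 1/r for all t ∈ [0, πr]. Then the chord length of γ is at least the chord length (diameter) of the comparison half-circle of radius r, that is, ‖γ(πr) − γ(0)‖ ≥ 2r. -/

import Mathlib

open Real Set
open scoped RealInnerProductSpace

/-- Core angle comparison: if `v` is a unit-vector-valued C¹ curve on `[c, d]` with
`‖v'‖ ≤ 1/r` and `d - c ≤ πr/2`, then `⟪v t, v c⟫ ≥ cos ((t - c)/r)`. -/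
lemma bow_core {E : Type*} [NormedAddCommGroup E] [InnerProductSpace ℝ E]
    {r c d : ℝ} (hr : 0 < r) (hcd : c < d) (hd : d ≤ c + π * r / 2)
    {v v' : ℝ → E}
    (hv : ∀ t ∈ Icc c d, HasDerivWithinAt v (v' t) (Icc c d) t)
    (hnorm : ∀ t ∈ Icc c d, ‖v t‖ = 1)
    (hbound : ∀ t ∈ Icc c d, ‖v' t‖ ≤ 1 / r) :
    ∀ t ∈ Icc c d, Real.cos ((t - c) / r) ≤ ⟪v t, v c⟫ := by
  set a : ℝ → ℝ := fun t => ⟪v t, v c⟫ with ha_def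
  set a' : ℝ → ℝ := fun t => ⟪v' t, v c⟫ with ha'_def
  have hmemc : c ∈ Icc c d := ⟨le_refl c, hcd.le⟩
  have ha : ∀ x ∈ Icc c d, HasDerivWithinAt a (a' x) (Icc c d) x := by
    intro x hx
    have := (hv x hx).inner ℝ (hasDerivWithinAt_const x (Icc c d) (v c))
    simpa [a, a'] using this
  -- orthogonality of v' and v
  have horth : ∀ x ∈ Icc c d, ⟪v' x, v x⟫ = 0 := by
    intro x hx
    have hud : UniqueDiffWithinAt ℝ (Icc c d) x := uniqueDiffOn_Icc hcd x hx
    have h1 : HasDerivWithinAt (fun t => ⟪v t, v t⟫)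
        (⟪v x, v' x⟫ + ⟪v' x, v x⟫) (Icc c d) x := (hv x hx).inner ℝ (hv x hx)
    have h2 : HasDerivWithinAt (fun t => ⟪v t, v t⟫) 0 (Icc c d) x := by
      have : HasDerivWithinAt (fun _ : ℝ => (1:ℝ)) 0 (Icc c d) x :=
        hasDerivWithinAt_const x _ 1
      refine this.congr (fun y hy => ?_) ?_
      · rw [real_inner_self_eq_norm_sq, hnorm y hy]; norm_num
      · rw [real_inner_self_eq_norm_sq, hnorm x hx]; norm_num
    have h3 := (h1.derivWithin hud).symm.trans (h2.derivWithin hud)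
    have h4 := real_inner_comm (v x) (v' x)
    linarith
  have hanorm : ∀ x ∈ Icc c d, |a x| ≤ 1 := by
    intro x hx
    calc |a x| ≤ ‖v x‖ * ‖v c‖ := abs_real_inner_le_norm _ _
      _ = 1 := by rw [hnorm x hx, hnorm c hmemc]; ring
  -- key derivative bound
  have hkey : ∀ x ∈ Icc c d, |a' x| ≤ (1 / r) * Real.sqrt (1 - a x ^ 2) := by
    intro x hx
    have hw : a' x = ⟪v' x, v c - a x • v x⟫ := by
      rw [inner_sub_right, real_inner_smul_right, horth x hx]; simp [a']
    have hvc : ⟪v c, v x⟫ = a x := (real_inner_comm (v c) (v x)).symm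
    have hwnorm : ‖v c - a x • v x‖ = Real.sqrt (1 - a x ^ 2) := by
      have hsq : ‖v c - a x • v x‖ ^ 2 = 1 - a x ^ 2 := by
        rw [norm_sub_sq_real, real_inner_smul_right, hvc, norm_smul, hnorm x hx,
          hnorm c hmemc, Real.norm_eq_abs, mul_one, sq_abs]
        ring
      rw [← hsq, Real.sqrt_sq (norm_nonneg _)]
    calc |a' x| ≤ ‖v' x‖ * ‖v c - a x • v x‖ := by rw [hw]; exact abs_real_inner_le_norm _ _
      _ ≤ (1 / r) * Real.sqrt (1 - a x ^ 2) := by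
          rw [hwnorm]
          exact mul_le_mul_of_nonneg_right (hbound x hx) (Real.sqrt_nonneg _)
  have hπpos : (0:ℝ) < π + 2 := by positivity
  -- comparison step with perturbed cosine
  have hstep : ∀ ε : ℝ, 0 < ε → ε < π / (π + 2) →
      ∀ t ∈ Icc c d, Real.cos ((1 + ε) * ((t - c) / r) + ε) ≤ a t := by
    intro ε hε hε' t ht
    set F : ℝ → ℝ := fun t => Real.cos ((1 + ε) * ((t - c) / r) + ε) with hF_def
    set F' : ℝ → ℝ := fun t => -Real.sin ((1 + ε) * ((t - c) / r) + ε) * ((1 + ε) * (1 / r))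
      with hF'_def
    have hFd : ∀ x : ℝ, HasDerivAt F (F' x) x := by
      intro x
      have hu : HasDerivAt (fun t : ℝ => (1 + ε) * ((t - c) / r) + ε) ((1 + ε) * (1 / r)) x := by
        have : HasDerivAt (fun t : ℝ => (t - c) / r) (1 / r) x := by
          simpa using (((hasDerivAt_id x).sub_const c).div_const r)
        exact (this.const_mul (1 + ε)).add_const ε
      exact (Real.hasDerivAt_cos _).comp x hu
    have hε'' : ε * (π + 2) < π := by rwa [lt_div_iff₀ hπpos] at hε'
    -- angle range facts
    have hrange : ∀ x ∈ Icc c d,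
        0 < (1 + ε) * ((x - c) / r) + ε ∧ (1 + ε) * ((x - c) / r) + ε < π := by
      intro x hx
      constructor
      · have h1 : 0 ≤ (x - c) / r := div_nonneg (by linarith [hx.1]) hr.le
        nlinarith
      · have h2 : (x - c) / r ≤ π / 2 := by
          rw [div_le_iff₀ hr]
          have := hx.2
          nlinarith
        have : (1 + ε) * ((x - c) / r) + ε ≤ (1 + ε) * (π / 2) + ε := by nlinarith
        nlinarith
    have main := image_le_of_deriv_right_lt_deriv_boundary' (f := F) (f' := F')
      (B := a) (B' := a') (a := c) (b := d)
      ((continuous_cos.comp (by fun_prop)).continuousOn)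
      (fun x _ => (hFd x).hasDerivWithinAt)
      (by
        -- F c ≤ a c
        have hac : a c = 1 := by
          show ⟪v c, v c⟫ = 1
          rw [real_inner_self_eq_norm_sq, hnorm c hmemc]; norm_num
        rw [hac]
        exact Real.cos_le_one _)
      (fun x hx => (ha x hx).continuousWithinAt)
      (by
        intro x hx
        exact (ha x ⟨hx.1, hx.2.le⟩).mono_of_mem_nhdsWithin (Icc_mem_nhdsGE_of_mem hx))
      (by
        intro x hx hFx
        have hxcd : x ∈ Icc c d := ⟨hx.1, hx.2.le⟩
        obtain ⟨hu0, huπ⟩ := hrange x hxcd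
        set u := (1 + ε) * ((x - c) / r) + ε with hu_def
        have hsinpos : 0 < Real.sin u := Real.sin_pos_of_pos_of_lt_pi hu0 huπ
        have hsqrt : Real.sqrt (1 - a x ^ 2) = Real.sin u := by
          rw [← hFx]
          show Real.sqrt (1 - Real.cos u ^ 2) = Real.sin u
          have h1 : 1 - Real.cos u ^ 2 = Real.sin u ^ 2 := by
            have := Real.sin_sq_add_cos_sq u; linarith
          rw [h1, Real.sqrt_sq hsinpos.le]
        have hlow : -(1 / r) * Real.sin u ≤ a' x := by
          have hk := hkey x hxcd
          rw [hsqrt] at hk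
          have := neg_abs_le (a' x)
          linarith
        have hF'lt : F' x < -(1 / r) * Real.sin u := by
          show -Real.sin u * ((1 + ε) * (1 / r)) < -(1 / r) * Real.sin u
          have h1r : (0:ℝ) < 1 / r := by positivity
          nlinarith [mul_pos (mul_pos h1r hsinpos) hε]
        linarith)
    exact main ht
  -- take the limit ε → 0⁺
  intro t ht
  have hcont : Filter.Tendsto (fun ε : ℝ => Real.cos ((1 + ε) * ((t - c) / r) + ε))
      (nhdsWithin 0 (Ioi 0)) (nhds (Real.cos ((t - c) / r))) := by
    have hC : Continuous (fun ε : ℝ => Real.cos ((1 + ε) * ((t - c) / r) + ε)) :=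
      Real.continuous_cos.comp (by fun_prop)
    have h0 := hC.tendsto 0
    simp only [zero_add, add_zero, one_mul] at h0
    exact h0.mono_left nhdsWithin_le_nhds
  refine le_of_tendsto hcont ?_
  filter_upwards [Ioo_mem_nhdsGT_of_mem
    (⟨le_refl (0:ℝ), by positivity⟩ : (0:ℝ) ∈ Ico (0:ℝ) (π / (π + 2)))] with ε hε
  exact hstep ε hε.1 hε.2 t ht

/-- **Bow Lemma, Euclidean case (inequality).**
If `γ : [0, πr] → ℝⁿ` is a C² unit-speed curve whose curvature `‖γ''‖` is at most `1/r`,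
then its chord length is at least `2r`, the chord length of the comparison half-circle
of radius `r`. -/
theorem bow_lemma_euclidean {n : ℕ} (r : ℝ) (hr : 0 < r)
    (γ : ℝ → EuclideanSpace ℝ (Fin n))
    (hγ : ContDiffOn ℝ 2 γ (Icc 0 (π * r)))
    (hspeed : ∀ t ∈ Icc 0 (π * r), ‖derivWithin γ (Icc 0 (π * r)) t‖ = 1)
    (hcurv : ∀ t ∈ Icc 0 (π * r),
      ‖derivWithin (derivWithin γ (Icc 0 (π * r))) (Icc 0 (π * r)) t‖ ≤ 1 / r) :
    2 * r ≤ ‖γ (π * r) - γ 0‖ := by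
  have hπr : 0 < π * r := by positivity
  set L : ℝ := π * r with hL_def
  set s : Set ℝ := Icc 0 L with hs_def
  set v : ℝ → EuclideanSpace ℝ (Fin n) := derivWithin γ s with hv_def
  set v' : ℝ → EuclideanSpace ℝ (Fin n) := derivWithin v s with hv'_def
  have hudiff : UniqueDiffOn ℝ s := uniqueDiffOn_Icc hπr
  have hγd : ∀ t ∈ s, HasDerivWithinAt γ (v t) s t := fun t ht =>
    ((hγ.differentiableOn (by norm_num)) t ht).hasDerivWithinAt
  have hvC1 : ContDiffOn ℝ 1 v s := hγ.derivWithin hudiff (by norm_num)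
  have hvd : ∀ t ∈ s, HasDerivWithinAt v (v' t) s t := fun t ht =>
    ((hvC1.differentiableOn (by norm_num)) t ht).hasDerivWithinAt
  set m : ℝ := L / 2 with hm_def
  have hm_mem : m ∈ s := ⟨by positivity, by rw [hm_def]; linarith⟩
  have hmL : m < L := by rw [hm_def]; linarith
  have hsub : Icc m L ⊆ s := Icc_subset_Icc (by positivity) le_rfl
  have hLm : L - m = m := by rw [hm_def]; ring
  have hd2 : L ≤ m + π * r / 2 := by rw [hm_def, hL_def]; linarith
  -- right half
  have hright := bow_core hr hmL hd2
    (v := v) (v' := v')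
    (fun t ht => (hvd t (hsub ht)).mono hsub)
    (fun t ht => hspeed t (hsub ht))
    (fun t ht => hcurv t (hsub ht))
  -- left half, via the reversed curve
  have hL2 : L = 2 * m := by rw [hm_def]; ring
  have hmaps : MapsTo (fun t : ℝ => L - t) (Icc m L) s := by
    intro t ht
    refine mem_Icc.mpr ⟨?_, ?_⟩
    · show (0:ℝ) ≤ L - t; linarith [ht.2]
    · show L - t ≤ L; linarith [ht.1, hm_mem.1]
  have hleft := bow_core hr hmL hd2
    (v := fun t => v (L - t)) (v' := fun t => -v' (L - t))
    (fun t ht => by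
      have hφ : HasDerivWithinAt (fun t : ℝ => L - t) (-1) (Icc m L) t :=
        ((hasDerivAt_id t).const_sub L).hasDerivWithinAt
      have := (hvd (L - t) (hmaps ht)).scomp t hφ hmaps
      simpa [Function.comp_def] using this)
    (fun t ht => hspeed _ (hmaps ht))
    (fun t ht => by
      rw [norm_neg]; exact hcurv _ (hmaps ht))
  -- combined lower bound on ⟪v t, v m⟫
  have key : ∀ t ∈ s, Real.cos ((t - m) / r) ≤ ⟪v t, v m⟫ := by
    intro t ht
    rcases le_total t m with h | h
    · have hmem : L - t ∈ Icc m L := ⟨by linarith, by linarith [ht.1]⟩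
      have h2 := hleft (L - t) hmem
      have e1 : L - (L - t) = t := by ring
      have e2 : (L - t - m) / r = -((t - m) / r) := by rw [hL2]; ring
      rw [e1, hLm, e2, Real.cos_neg] at h2
      exact h2
    · exact hright t ⟨h, ht.2⟩
  -- FTC
  have hContv : ContinuousOn v s := hvC1.continuousOn
  have hint : IntervalIntegrable v MeasureTheory.volume 0 L := by
    apply ContinuousOn.intervalIntegrable
    rwa [uIcc_of_le hπr.le]
  have hFTC : ∫ t in (0:ℝ)..L, v t = γ L - γ 0 :=
    intervalIntegral.integral_eq_sub_of_hasDeriv_right_of_le hπr.le hγ.continuousOn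
      (fun x hx => (hγd x ⟨hx.1.le, hx.2.le⟩).mono_of_mem_nhdsWithin
        (Icc_mem_nhdsGT_of_mem ⟨hx.1.le, hx.2⟩))
      hint
  have hinner : (∫ t in (0:ℝ)..L, ⟪v m, v t⟫) = ⟪v m, γ L - γ 0⟫ := by
    have := (innerSL ℝ (v m)).intervalIntegral_comp_comm hint
    rw [hFTC] at this
    exact this
  -- integrability of the scalar functions
  have hint1 : IntervalIntegrable (fun t => Real.cos ((t - m) / r))
      MeasureTheory.volume 0 L := (Continuous.intervalIntegrable (by fun_prop) _ _)
  have hint2 : IntervalIntegrable (fun t => ⟪v m, v t⟫) MeasureTheory.volume 0 L := by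
    apply ContinuousOn.intervalIntegrable
    rw [uIcc_of_le hπr.le]
    exact (innerSL ℝ (v m)).continuous.comp_continuousOn hContv
  have hmono : (∫ t in (0:ℝ)..L, Real.cos ((t - m) / r)) ≤ ∫ t in (0:ℝ)..L, ⟪v m, v t⟫ := by
    apply intervalIntegral.integral_mono_on hπr.le hint1 hint2
    intro t ht
    have := key t ht
    rwa [real_inner_comm] at this
  have hcos_int : (∫ t in (0:ℝ)..L, Real.cos ((t - m) / r)) = 2 * r := by
    rw [intervalIntegral.integral_comp_sub_right (fun y => Real.cos (y / r)) m]
    rw [intervalIntegral.integral_comp_div (c := r) (f := Real.cos) hr.ne']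
    rw [integral_cos]
    rw [zero_sub, hLm]
    have hmr : m / r = π / 2 := by
      rw [hm_def, hL_def]; field_simp
    rw [neg_div, hmr]
    rw [Real.sin_neg, Real.sin_pi_div_two]
    simp [smul_eq_mul]
    ring
  have hnorm_e : ‖v m‖ = 1 := hspeed m hm_mem
  have hfinal : ⟪v m, γ L - γ 0⟫ ≤ ‖γ L - γ 0‖ := by
    calc ⟪v m, γ L - γ 0⟫ ≤ ‖v m‖ * ‖γ L - γ 0‖ := real_inner_le_norm _ _
      _ = ‖γ L - γ 0‖ := by rw [hnorm_e, one_mul]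
  calc 2 * r = ∫ t in (0:ℝ)..L, Real.cos ((t - m) / r) := hcos_int.symm
    _ ≤ ∫ t in (0:ℝ)..L, ⟪v m, v t⟫ := hmono
    _ = ⟪v m, γ L - γ 0⟫ := hinner
    _ ≤ ‖γ L - γ 0‖ := hfinal
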